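/- In the free monoid C* on the alphabet C = {x, y, e_1, …, e_n}, the relations e_1 ⋯ e_n x = x e_1 ⋯ e_n = e_1 ⋯ e_n = e_1 ⋯ e_n y = y e_1 ⋯ e_n are consequences of the set of relations U. -/
import Mathlib


/-! The alphabet `C = {x, y, e_1, …, e_n}` (with `n + 2` letters), modelled as
`Bool ⊕ Fin n`: `.inl false` is the letter `x`, `.inl true` is the letter `y`,
and `.inr i` is the letter `e_{i+1}`. -/

/-- The free monoid on the alphabet `C = {x, y, e_1, …, e_n}`. -/
abbrev Cw (n : ℕ) := FreeMonoid (Bool ⊕ Fin n)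

/-- The letter `x`. -/
def Cx (n : ℕ) : Cw n := FreeMonoid.of (Sum.inl false)

/-- The letter `y`. -/
def Cy (n : ℕ) : Cw n := FreeMonoid.of (Sum.inl true)

/-- The letter `e_{i+1}` (so `Ce ⟨0,_⟩ = e_1`, …, `Ce ⟨n-1,_⟩ = e_n`). -/
def Ce {n : ℕ} (i : Fin n) : Cw n := FreeMonoid.of (Sum.inr i)

/-- The word `e_1 e_2 ⋯ e_n`. -/
def CeProd (n : ℕ) : Cw n := ((List.finRange n).map Ce).prod

/-- The word `e_2 ⋯ e_n`. -/
def CeProdTail (n : ℕ) : Cw n := (((List.finRange n).drop 1).map Ce).prod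

/-- The set `U` of relations of the paper (in `0`-based indexing of the letters `e`):
`(U_1) e_i² = e_i`; `(U_2) xy = e_n` and `yx = e_1`; `(U_3) x e_1 = x` and `e_1 y = y`;
`(U_4) e_i e_j = e_j e_i` for `i < j`; `(U_5) x e_{i+1} = e_i x` for `1 ≤ i ≤ n-1`;
`(U_6) x e_2 ⋯ e_n = e_1 e_2 ⋯ e_n`. -/
inductive Urel (n : ℕ) : Cw n → Cw n → Prop
  | u1 (i : Fin n) : Urel n (Ce i * Ce i) (Ce i)
  | u2a (j : Fin n) : (j : ℕ) = n - 1 → Urel n (Cx n * Cy n) (Ce j)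
  | u2b (i : Fin n) : (i : ℕ) = 0 → Urel n (Cy n * Cx n) (Ce i)
  | u3a (i : Fin n) : (i : ℕ) = 0 → Urel n (Cx n * Ce i) (Cx n)
  | u3b (i : Fin n) : (i : ℕ) = 0 → Urel n (Ce i * Cy n) (Cy n)
  | u4 (i j : Fin n) : i < j → Urel n (Ce i * Ce j) (Ce j * Ce i)
  | u5 (i j : Fin n) : (i : ℕ) + 1 = (j : ℕ) → Urel n (Cx n * Ce j) (Ce i * Cx n)
  | u6 : Urel n (Cx n * CeProdTail n) (CeProd n)

namespace UrelAux

/-- `e_{i % n + 1}` as a word, for a natural index. -/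
def CeM (n : ℕ) (hn : 0 < n) (i : ℕ) : Cw n := Ce ⟨i % n, Nat.mod_lt _ hn⟩

/-- The word `e_{s+1} e_{s+2} ⋯ e_{s+k}` (indices mod `n`). -/
def AR (n : ℕ) (hn : 0 < n) (s k : ℕ) : Cw n := ((List.range' s k).map (CeM n hn)).prod

lemma AR_zero (n : ℕ) (hn : 0 < n) (s : ℕ) : AR n hn s 0 = 1 := rfl

lemma AR_succ_left (n : ℕ) (hn : 0 < n) (s k : ℕ) :
    AR n hn s (k + 1) = CeM n hn s * AR n hn (s + 1) k := by
  simp [AR, List.range'_succ]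

lemma AR_succ_right (n : ℕ) (hn : 0 < n) (s k : ℕ) :
    AR n hn s (k + 1) = AR n hn s k * CeM n hn (s + k) := by
  simp [AR, List.range'_concat]


lemma ceProd_eq (n : ℕ) (hn : 0 < n) : CeProd n = AR n hn 0 n := by
  unfold CeProd AR
  congr 1
  apply List.ext_getElem
  · simp
  · intro i h1 h2
    simp only [List.getElem_map, List.getElem_finRange, List.getElem_range']
    simp only [List.length_map, List.length_range'] at h2
    simp [CeM, Fin.cast, Fin.ext_iff, Nat.mod_eq_of_lt h2]

lemma ceProdTail_eq (n : ℕ) (hn : 0 < n) : CeProdTail n = AR n hn 1 (n - 1) := by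
  unfold CeProdTail AR
  congr 1
  apply List.ext_getElem
  · simp
  · intro i h1 h2
    simp only [List.getElem_map, List.getElem_drop, List.getElem_finRange, List.getElem_range']
    simp only [List.length_map, List.length_range'] at h2
    have h3 : 1 + i < n := by omega
    simp only [CeM, Fin.cast]
    congr 1
    rw [Fin.mk.injEq, one_mul, Nat.mod_eq_of_lt h3]

variable {n : ℕ} (hn : 0 < n)

lemma rel_of {a b : Cw n} (h : Urel n a b) : conGen (Urel n) a b := ConGen.Rel.of a b h

/-- shift lemma: `e_1 ⋯ e_k x ≡ x e_2 ⋯ e_{k+1}` for `k + 1 ≤ n`. -/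
lemma shift : ∀ k, k + 1 ≤ n →
    conGen (Urel n) (AR n hn 0 k * Cx n) (Cx n * AR n hn 1 k) := by
  set R := conGen (Urel n) with hR
  intro k
  induction k with
  | zero => intro _; simp only [AR_zero, one_mul, mul_one]; exact R.refl _
  | succ k ih =>
    intro hk
    have hk' : k + 1 ≤ n := by omega
    have h1 : R (CeM n hn k * Cx n) (Cx n * CeM n hn (k + 1)) := by
      refine R.symm (rel_of (Urel.u5 ⟨k % n, Nat.mod_lt _ hn⟩
        ⟨(k+1) % n, Nat.mod_lt _ hn⟩ ?_))
      simp [Nat.mod_eq_of_lt (show k < n by omega), Nat.mod_eq_of_lt (show k + 1 < n by omega)]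
    have s1 : AR n hn 0 (k+1) * Cx n = AR n hn 0 k * (CeM n hn k * Cx n) := by
      rw [AR_succ_right, Nat.zero_add, mul_assoc]
    have s2 : R (AR n hn 0 k * (CeM n hn k * Cx n)) (AR n hn 0 k * (Cx n * CeM n hn (k+1))) :=
      R.mul (R.refl _) h1
    have s3 : R ((AR n hn 0 k * Cx n) * CeM n hn (k+1)) ((Cx n * AR n hn 1 k) * CeM n hn (k+1)) :=
      R.mul (ih hk') (R.refl _)
    have s4 : (Cx n * AR n hn 1 k) * CeM n hn (k+1) = Cx n * AR n hn 1 (k+1) := by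
      rw [AR_succ_right n hn 1 k, Nat.add_comm 1 k, mul_assoc]
    rw [s1, ← mul_assoc] at *
    exact R.trans s2 (by rw [← s4]; rw [← mul_assoc]; exact s3)

end UrelAux

open UrelAux in
/-- The relations
`e_1 ⋯ e_n x = x e_1 ⋯ e_n = e_1 ⋯ e_n = e_1 ⋯ e_n y = y e_1 ⋯ e_n` are consequences of
the set of relations `U`. -/
theorem Urel.consequence_zero (n : ℕ) (hn : 1 ≤ n) :
    conGen (Urel n) (CeProd n * Cx n) (CeProd n) ∧
    conGen (Urel n) (Cx n * CeProd n) (CeProd n) ∧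
    conGen (Urel n) (CeProd n * Cy n) (CeProd n) ∧
    conGen (Urel n) (Cy n * CeProd n) (CeProd n) := by
  set R := conGen (Urel n) with hR
  have hn0 : 0 < n := hn
  have e0 : CeM n hn0 0 = Ce ⟨0, hn0⟩ := by
    simp [CeM]
  have elast : CeM n hn0 (n - 1) = Ce ⟨n - 1, by omega⟩ := by
    simp [CeM, Nat.mod_eq_of_lt (show n - 1 < n by omega)]
  have hE : CeProd n = AR n hn0 0 n := ceProd_eq n hn0
  have hT : CeProdTail n = AR n hn0 1 (n - 1) := ceProdTail_eq n hn0
  have hsplitL : CeProd n = Ce ⟨0, hn0⟩ * CeProdTail n := by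
    have h := AR_succ_left n hn0 0 (n - 1)
    rw [Nat.sub_add_cancel hn] at h
    rw [hE, hT, h, e0, Nat.zero_add]
  have hsplitR : CeProd n = AR n hn0 0 (n - 1) * CeM n hn0 (n - 1) := by
    have h := AR_succ_right n hn0 0 (n - 1)
    rw [Nat.sub_add_cancel hn, Nat.zero_add] at h
    rw [hE, h]
  -- x E = E
  have hxE : R (Cx n * CeProd n) (CeProd n) := by
    have s1 : Cx n * CeProd n = (Cx n * Ce ⟨0, hn0⟩) * CeProdTail n := by
      rw [hsplitL, ← mul_assoc]
    have s2 : R ((Cx n * Ce ⟨0, hn0⟩) * CeProdTail n) (Cx n * CeProdTail n) :=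
      R.mul (rel_of (Urel.u3a ⟨0, hn0⟩ rfl)) (R.refl _)
    rw [s1]
    exact R.trans s2 (rel_of Urel.u6)
  -- y E = E
  have hyE : R (Cy n * CeProd n) (CeProd n) := by
    have s1 : R (Cy n * CeProd n) (Cy n * (Cx n * CeProdTail n)) :=
      R.mul (R.refl _) (R.symm (rel_of Urel.u6))
    have s2 : R ((Cy n * Cx n) * CeProdTail n) (Ce ⟨0, hn0⟩ * CeProdTail n) :=
      R.mul (rel_of (Urel.u2b ⟨0, hn0⟩ rfl)) (R.refl _)
    rw [← mul_assoc] at s1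
    rw [← hsplitL] at s2
    exact R.trans s1 s2
  -- e_n x = x
  have henx : R (CeM n hn0 (n - 1) * Cx n) (Cx n) := by
    have s1 : R (CeM n hn0 (n - 1) * Cx n) ((Cx n * Cy n) * Cx n) := by
      rw [elast]
      exact R.mul (R.symm (rel_of (Urel.u2a ⟨n - 1, by omega⟩ rfl))) (R.refl _)
    have s2 : R (Cx n * (Cy n * Cx n)) (Cx n * Ce ⟨0, hn0⟩) :=
      R.mul (R.refl _) (rel_of (Urel.u2b ⟨0, hn0⟩ rfl))
    rw [← mul_assoc] at s2
    exact R.trans s1 (R.trans s2 (rel_of (Urel.u3a ⟨0, hn0⟩ rfl)))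
  -- E x = E
  have hEx : R (CeProd n * Cx n) (CeProd n) := by
    have s1 : CeProd n * Cx n = AR n hn0 0 (n-1) * (CeM n hn0 (n-1) * Cx n) := by
      rw [hsplitR, mul_assoc]
    have s2 : R (AR n hn0 0 (n-1) * (CeM n hn0 (n-1) * Cx n)) (AR n hn0 0 (n-1) * Cx n) :=
      R.mul (R.refl _) henx
    have s3 : R (AR n hn0 0 (n-1) * Cx n) (Cx n * AR n hn0 1 (n-1)) := shift hn0 (n-1) (by omega)
    rw [← hT] at s3
    rw [s1]
    exact R.trans s2 (R.trans s3 (rel_of Urel.u6))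
  -- E y = E
  have hEy : R (CeProd n * Cy n) (CeProd n) := by
    have s1 : R (CeProd n * Cy n) ((CeProd n * Cx n) * Cy n) := R.mul (R.symm hEx) (R.refl _)
    have s2 : R (CeProd n * (Cx n * Cy n)) (CeProd n * CeM n hn0 (n-1)) := by
      rw [elast]
      exact R.mul (R.refl _) (rel_of (Urel.u2a ⟨n - 1, by omega⟩ rfl))
    rw [← mul_assoc] at s2
    have s3 : CeProd n * CeM n hn0 (n-1) = AR n hn0 0 (n-1) * (CeM n hn0 (n-1) * CeM n hn0 (n-1)) := by
      rw [hsplitR, mul_assoc]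
    have s4 : R (AR n hn0 0 (n-1) * (CeM n hn0 (n-1) * CeM n hn0 (n-1)))
        (AR n hn0 0 (n-1) * CeM n hn0 (n-1)) := by
      rw [elast]
      exact R.mul (R.refl _) (rel_of (Urel.u1 _))
    rw [← hsplitR] at s4
    rw [s3] at s2
    exact R.trans s1 (R.trans s2 s4)
  exact ⟨hEx, hxE, hEy, hyE⟩
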